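/- arXiv:1302.1737 — 2 statements merged into one kernel-verified Lean document; each statement's English description precedes it below -/
import Mathlib

section
/- The language interpretation of the matricial evaluation of a DFA equals the language recognised by that DFA: R(u·M*·v) is exactly the set of words accepted by the automaton (u,M,v). -/
structure IsKleeneAlgebra {X : Type*} (add mul : X → X → X) (star : X → X)
    (one zero : X) : Prop where
  add_assoc : ∀ x y z, add (add x y) z = add x (add y z)
  add_comm : ∀ x y, add x y = add y x
  add_idem : ∀ x, add x x = x
  add_zero : ∀ x, add x zero = x
  mul_assoc : ∀ x y z, mul (mul x y) z = mul x (mul y z)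
  one_mul : ∀ x, mul one x = x
  mul_one : ∀ x, mul x one = x
  zero_mul : ∀ x, mul zero x = zero
  mul_zero : ∀ x, mul x zero = zero
  left_distrib : ∀ x y z, mul x (add y z) = add (mul x y) (mul x z)
  right_distrib : ∀ x y z, mul (add x y) z = add (mul x z) (mul y z)
  star_unfold : ∀ x, add (add one (mul x (star x))) (star x) = star x
  star_ind_left : ∀ x y, add (mul y x) x = x → add (mul (star y) x) x = x
  star_ind_right : ∀ x y, add (mul x y) x = x → add (mul x (star y)) x = x

inductive Regex (A : Type) : Type
  | zero : Regex A
  | one : Regex A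
  | letter : A → Regex A
  | plus : Regex A → Regex A → Regex A
  | mul : Regex A → Regex A → Regex A
  | star : Regex A → Regex A

def Regex.eval {A : Type} {X : Type*} [KleeneAlgebra X] (σ : A → X) :
    Regex A → X
  | .zero => 0
  | .one => 1
  | .letter p => σ p
  | .plus x y => x.eval σ + y.eval σ
  | .mul x y => x.eval σ * y.eval σ
  | .star x => KStar.kstar (x.eval σ)

/-- KA-provable equality: `x = y` holds in every Kleene algebra under
every interpretation. -/
def KAEquiv {A : Type} (x y : Regex A) : Prop :=
  ∀ (X : Type) [KleeneAlgebra X] (σ : A → X), x.eval σ = y.eval σ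

instance regexSetoid (A : Type) : Setoid (Regex A) :=
  ⟨KAEquiv, fun _ _ _ _ => rfl,
   fun h X _ σ => (h X σ).symm,
   fun h1 h2 X _ σ => (h1 X σ).trans (h2 X σ)⟩

/-- Regular expressions modulo KA-provable equality. -/
def RegexQ (A : Type) := Quotient (regexSetoid A)

def RegexQ.zero {A : Type} : RegexQ A := ⟦Regex.zero⟧
def RegexQ.one {A : Type} : RegexQ A := ⟦Regex.one⟧

def RegexQ.add {A : Type} : RegexQ A → RegexQ A → RegexQ A :=
  Quotient.map₂ Regex.plus (fun _ _ h1 _ _ h2 X _ σ => by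
    simp [Regex.eval, h1 X σ, h2 X σ])

def RegexQ.mul {A : Type} : RegexQ A → RegexQ A → RegexQ A :=
  Quotient.map₂ Regex.mul (fun _ _ h1 _ _ h2 X _ σ => by
    simp [Regex.eval, h1 X σ, h2 X σ])

def RegexQ.sum {A : Type} (l : List (RegexQ A)) : RegexQ A :=
  l.foldr RegexQ.add RegexQ.zero

/-- Matrix addition over `RegexQ`. -/
def mAdd {A : Type} {ι κ : Type} (M N : Matrix ι κ (RegexQ A)) :
    Matrix ι κ (RegexQ A) :=
  Matrix.of fun i j => (M i j).add (N i j)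

/-- Matrix multiplication over `RegexQ`. -/
noncomputable def mMul {A : Type} {ι κ l : Type} [Fintype κ] (M : Matrix ι κ (RegexQ A))
    (N : Matrix κ l (RegexQ A)) : Matrix ι l (RegexQ A) :=
  Matrix.of fun i j => RegexQ.sum ((Finset.univ.toList (α := κ)).map fun k => (M i k).mul (N k j))

def mId {A : Type} (ι : Type) [DecidableEq ι] : Matrix ι ι (RegexQ A) :=
  Matrix.of fun i j => if i = j then RegexQ.one else RegexQ.zero

def mZero {A : Type} (ι κ : Type) : Matrix ι κ (RegexQ A) :=
  Matrix.of fun _ _ => RegexQ.zero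

/-- The 0-1 initial row vector of a DFA. -/
def dfaU {A : Type} {n : ℕ} (start : Fin n) : Matrix (Fin 1) (Fin n) (RegexQ A) :=
  Matrix.of fun _ j => if j = start then RegexQ.one else RegexQ.zero

/-- The transition matrix of a DFA: entry (i,j) is the sum of the letters
leading from state i to state j, so that each row contains exactly one
occurrence of each letter. -/
noncomputable def dfaM {A : Type} [Fintype A] {n : ℕ} (step : Fin n → A → Fin n) :
    Matrix (Fin n) (Fin n) (RegexQ A) :=
  Matrix.of fun i j =>
    RegexQ.sum (((Finset.univ.filter fun p => step i p = j).toList).map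
      fun p => ⟦Regex.letter p⟧)

/-- The 0-1 accepting column vector of a DFA. -/
def dfaV {A : Type} {n : ℕ} (accept : Fin n → Bool) :
    Matrix (Fin n) (Fin 1) (RegexQ A) :=
  Matrix.of fun i _ => if accept i then RegexQ.one else RegexQ.zero

/-- The word accepted relation of a DFA. -/
def dfaAccepts {A : Type} {n : ℕ} (step : Fin n → A → Fin n) (start : Fin n)
    (accept : Fin n → Bool) (w : List A) : Prop :=
  accept (w.foldl step start) = true

/-- Language interpretation of a regular expression modulo KA equality. -/
def RegexQ.lang {A : Type} : RegexQ A → Language A :=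
  Quotient.lift (fun x => Regex.eval (fun p => ({[p]} : Language A)) x)
    (fun _ _ h => h (Language A) _)


open Computability

namespace RegexQ
variable {A : Type}

def star {A : Type} : RegexQ A → RegexQ A :=
  Quotient.map Regex.star (fun _ _ h X _ σ => by simp [Regex.eval, h X σ])

instance : Add (RegexQ A) := ⟨RegexQ.add⟩
instance : Mul (RegexQ A) := ⟨RegexQ.mul⟩
instance : Zero (RegexQ A) := ⟨RegexQ.zero⟩
instance : One (RegexQ A) := ⟨RegexQ.one⟩
instance : KStar (RegexQ A) := ⟨RegexQ.star⟩
instance : LE (RegexQ A) := ⟨fun a b => a + b = b⟩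

def evalQ {X : Type} [KleeneAlgebra X] (σ : A → X) : RegexQ A → X :=
  Quotient.lift (Regex.eval σ) (fun _ _ h => h X σ)

@[simp] lemma evalQ_mk {X : Type} [KleeneAlgebra X] (σ : A → X) (r : Regex A) :
    evalQ σ (⟦r⟧ : RegexQ A) = r.eval σ := rfl

@[simp] lemma evalQ_add {X : Type} [KleeneAlgebra X] (σ : A → X) (a b : RegexQ A) :
    evalQ σ (a + b) = evalQ σ a + evalQ σ b := by
  induction a, b using Quotient.inductionOn₂; rfl

@[simp] lemma evalQ_mul {X : Type} [KleeneAlgebra X] (σ : A → X) (a b : RegexQ A) :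
    evalQ σ (a * b) = evalQ σ a * evalQ σ b := by
  induction a, b using Quotient.inductionOn₂; rfl

@[simp] lemma evalQ_star {X : Type} [KleeneAlgebra X] (σ : A → X) (a : RegexQ A) :
    evalQ σ a∗ = (evalQ σ a)∗ := by
  induction a using Quotient.inductionOn; rfl

@[simp] lemma evalQ_zero {X : Type} [KleeneAlgebra X] (σ : A → X) :
    evalQ σ (0 : RegexQ A) = 0 := rfl

@[simp] lemma evalQ_one {X : Type} [KleeneAlgebra X] (σ : A → X) :
    evalQ σ (1 : RegexQ A) = 1 := rfl

lemma ext {a b : RegexQ A}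
    (h : ∀ (X : Type) [KleeneAlgebra X] (σ : A → X), evalQ σ a = evalQ σ b) : a = b := by
  induction a, b using Quotient.inductionOn₂ with
  | h a b => exact Quotient.sound (fun X _ σ => h X σ)

lemma eval_le {X : Type} [KleeneAlgebra X] (σ : A → X) {a b : RegexQ A}
    (h : a ≤ b) : evalQ σ a ≤ evalQ σ b := by
  have h2 := congrArg (evalQ σ) (show a + b = b from h)
  simp only [evalQ_add] at h2
  exact add_eq_right_iff_le.mp h2

lemma le_ext {a b : RegexQ A}
    (h : ∀ (X : Type) [KleeneAlgebra X] (σ : A → X), evalQ σ a ≤ evalQ σ b) :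
    a ≤ b :=
  show a + b = b from
    ext fun X _ σ => by simp only [evalQ_add]; exact add_eq_right_iff_le.mpr (h X σ)

instance instKA : KleeneAlgebra (RegexQ A) where
  add := (· + ·)
  zero := 0
  mul := (· * ·)
  one := 1
  kstar := KStar.kstar
  le := (· ≤ ·)
  sup := (· + ·)
  bot := 0
  nsmul := nsmulRec
  npow := npowRec
  add_assoc a b c := ext fun X _ σ => by simp only [evalQ_add]; exact add_assoc _ _ _
  zero_add a := ext fun X _ σ => by simp
  add_zero a := ext fun X _ σ => by simp
  add_comm a b := ext fun X _ σ => by simp only [evalQ_add]; exact add_comm _ _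
  mul_assoc a b c := ext fun X _ σ => by simp [mul_assoc]
  one_mul a := ext fun X _ σ => by simp
  mul_one a := ext fun X _ σ => by simp
  zero_mul a := ext fun X _ σ => by simp
  mul_zero a := ext fun X _ σ => by simp
  left_distrib a b c := ext fun X _ σ => by simp only [evalQ_add, evalQ_mul]; exact left_distrib _ _ _
  right_distrib a b c := ext fun X _ σ => by simp only [evalQ_add, evalQ_mul]; exact right_distrib _ _ _
  le_refl a := le_ext fun X _ σ => le_refl _
  le_trans a b c h1 h2 := le_ext fun X _ σ => (eval_le σ h1).trans (eval_le σ h2)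
  le_antisymm a b h1 h2 := ext fun X _ σ => le_antisymm (eval_le σ h1) (eval_le σ h2)
  le_sup_left a b := le_ext fun X _ σ => by simp [self_le_add_right]
  le_sup_right a b := le_ext fun X _ σ => by simp [self_le_add_left]
  sup_le a b c h1 h2 := le_ext fun X _ σ => by
    simp only [evalQ_add]; exact add_le (eval_le σ h1) (eval_le σ h2)
  bot_le a := le_ext fun X _ σ => by simp
  one_le_kstar a := le_ext fun X _ σ => by simp [one_le_kstar]
  mul_kstar_le_kstar a := le_ext fun X _ σ => by simp [mul_kstar_le_kstar]
  kstar_mul_le_kstar a := le_ext fun X _ σ => by simp [kstar_mul_le_kstar]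
  mul_kstar_le_self a b h := le_ext fun X _ σ => by
    simp only [evalQ_mul, evalQ_star]
    exact mul_kstar_le_self (by simpa using eval_le σ h)
  kstar_mul_le_self a b h := le_ext fun X _ σ => by
    simp only [evalQ_mul, evalQ_star]
    exact kstar_mul_le_self (by simpa using eval_le σ h)

end RegexQ

open Computability

section BStar
variable {X : Type} [KleeneAlgebra X]

/-- Top-left scalar block of a matrix. -/
def blkA {n : ℕ} (M : Matrix (Fin (n+1)) (Fin (n+1)) X) : X := M 0 0
/-- Top row block. -/
def blkB {n : ℕ} (M : Matrix (Fin (n+1)) (Fin (n+1)) X) : Fin n → X := fun j => M 0 j.succ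
/-- Left column block. -/
def blkC {n : ℕ} (M : Matrix (Fin (n+1)) (Fin (n+1)) X) : Fin n → X := fun i => M i.succ 0
/-- Bottom-right block. -/
def blkD {n : ℕ} (M : Matrix (Fin (n+1)) (Fin (n+1)) X) : Matrix (Fin n) (Fin n) X :=
  Matrix.of fun i j => M i.succ j.succ

/-- Kleene's matrix star, by peeling one row and column at a time. -/
def bstar : {n : ℕ} → Matrix (Fin n) (Fin n) X → Matrix (Fin n) (Fin n) X
  | 0, _ => Matrix.of fun i _ => i.elim0
  | (n+1), M =>
    let d' := bstar (blkD M)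
    let f := (blkA M + ∑ k, ∑ l, blkB M k * d' k l * blkC M l)∗
    Matrix.of (Fin.cases
      (Fin.cases f (fun j' => f * ∑ k, blkB M k * d' k j'))
      (fun i' => Fin.cases ((∑ l, d' i' l * blkC M l) * f)
        (fun j' => d' i' j' + (∑ l, d' i' l * blkC M l) * f * (∑ k, blkB M k * d' k j'))))

lemma bstar_00 {n : ℕ} (M : Matrix (Fin (n+1)) (Fin (n+1)) X) :
    bstar M 0 0 = (blkA M + ∑ k, ∑ l, blkB M k * bstar (blkD M) k l * blkC M l)∗ := rfl

lemma bstar_0s {n : ℕ} (M : Matrix (Fin (n+1)) (Fin (n+1)) X) (j : Fin n) :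
    bstar M 0 j.succ =
      (blkA M + ∑ k, ∑ l, blkB M k * bstar (blkD M) k l * blkC M l)∗ *
        ∑ k, blkB M k * bstar (blkD M) k j := by
  show (Matrix.of _ : Matrix (Fin (n+1)) (Fin (n+1)) X) 0 j.succ = _
  rw [Matrix.of_apply, Fin.cases_zero, Fin.cases_succ]

lemma bstar_s0 {n : ℕ} (M : Matrix (Fin (n+1)) (Fin (n+1)) X) (i : Fin n) :
    bstar M i.succ 0 =
      (∑ l, bstar (blkD M) i l * blkC M l) *
        (blkA M + ∑ k, ∑ l, blkB M k * bstar (blkD M) k l * blkC M l)∗ := by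
  show (Matrix.of _ : Matrix (Fin (n+1)) (Fin (n+1)) X) i.succ 0 = _
  rw [Matrix.of_apply, Fin.cases_succ, Fin.cases_zero]

lemma bstar_ss {n : ℕ} (M : Matrix (Fin (n+1)) (Fin (n+1)) X) (i j : Fin n) :
    bstar M i.succ j.succ =
      bstar (blkD M) i j + (∑ l, bstar (blkD M) i l * blkC M l) *
        (blkA M + ∑ k, ∑ l, blkB M k * bstar (blkD M) k l * blkC M l)∗ *
        (∑ k, blkB M k * bstar (blkD M) k j) := by
  show (Matrix.of _ : Matrix (Fin (n+1)) (Fin (n+1)) X) i.succ j.succ = _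
  rw [Matrix.of_apply, Fin.cases_succ, Fin.cases_succ]

theorem one_le_bstar : ∀ {n : ℕ} (M : Matrix (Fin n) (Fin n) X) (i : Fin n),
    1 ≤ bstar M i i := by
  intro n
  induction n with
  | zero => exact fun M i => i.elim0
  | succ n ih =>
    intro M i
    refine Fin.cases ?_ ?_ i
    · rw [bstar_00]; exact one_le_kstar
    · intro i'
      rw [bstar_ss]
      exact (ih (blkD M) i').trans (self_le_add_right _ _)

lemma sum_le_of_forall_le {ι : Type} (s : Finset ι) (f : ι → X) (y : X)
    (h : ∀ i ∈ s, f i ≤ y) : (∑ i ∈ s, f i) ≤ y := by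
  classical
  induction s using Finset.induction with
  | empty => simpa using zero_le y
  | insert _ _ hx ih =>
    rw [Finset.sum_insert hx]
    exact add_le (h _ (Finset.mem_insert_self _ _))
      (ih fun i hi => h i (Finset.mem_insert_of_mem hi))

lemma le_kstar_mul (a b : X) : b ≤ a∗ * b := by
  calc b = 1 * b := (one_mul b).symm
    _ ≤ a∗ * b := mul_le_mul_left one_le_kstar b

theorem mul_bstar_le : ∀ {n : ℕ} (M : Matrix (Fin n) (Fin n) X) (i j : Fin n),
    (∑ k, M i k * bstar M k j) ≤ bstar M i j := by
  intro n
  induction n with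
  | zero => exact fun M i => i.elim0
  | succ n ih =>
    intro M i j
    have hdd' : ∀ i' j', (∑ k, blkD M i' k * bstar (blkD M) k j') ≤ bstar (blkD M) i' j' :=
      fun i' j' => ih (blkD M) i' j'
    have h1d' : ∀ i', 1 ≤ bstar (blkD M) i' i' := fun i' => one_le_bstar (blkD M) i'
    have hdd1 : ∀ i' j' k, blkD M i' k * bstar (blkD M) k j' ≤ bstar (blkD M) i' j' :=
      fun i' j' k => (Finset.single_le_sum
        (f := fun k => blkD M i' k * bstar (blkD M) k j')
        (fun _ _ => zero_le) (Finset.mem_univ k)).trans (hdd' i' j')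
    have hM00 : M 0 0 = blkA M := rfl
    have hM0s : ∀ k : Fin n, M 0 k.succ = blkB M k := fun _ => rfl
    have hMs0 : ∀ k : Fin n, M k.succ 0 = blkC M k := fun _ => rfl
    have hMss : ∀ k l : Fin n, M k.succ l.succ = blkD M k l := fun _ _ => rfl
    have hgf : (blkA M + ∑ k, ∑ l, blkB M k * bstar (blkD M) k l * blkC M l) *
        (blkA M + ∑ k, ∑ l, blkB M k * bstar (blkD M) k l * blkC M l)∗ ≤
        (blkA M + ∑ k, ∑ l, blkB M k * bstar (blkD M) k l * blkC M l)∗ := mul_kstar_le_kstar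
    have haG : blkA M ≤ blkA M + ∑ k, ∑ l, blkB M k * bstar (blkD M) k l * blkC M l :=
      self_le_add_right _ _
    have hbCG : ∀ k, blkB M k * (∑ l, bstar (blkD M) k l * blkC M l) ≤
        blkA M + ∑ k, ∑ l, blkB M k * bstar (blkD M) k l * blkC M l := by
      intro k
      rw [Finset.mul_sum]
      refine le_trans ?_ (self_le_add_left _ _)
      refine le_trans ?_ (Finset.single_le_sum
        (f := fun k => ∑ l, blkB M k * bstar (blkD M) k l * blkC M l)
        (fun _ _ => zero_le) (Finset.mem_univ k))
      exact le_of_eq (Finset.sum_congr rfl fun l _ => (mul_assoc _ _ _).symm)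
    have hcC : ∀ i', blkC M i' ≤ ∑ l, bstar (blkD M) i' l * blkC M l := by
      intro i'
      calc blkC M i' = 1 * blkC M i' := (one_mul _).symm
        _ ≤ bstar (blkD M) i' i' * blkC M i' := mul_le_mul_left (h1d' i') _
        _ ≤ _ := Finset.single_le_sum (f := fun l => bstar (blkD M) i' l * blkC M l)
            (fun _ _ => zero_le) (Finset.mem_univ i')
    have hdC : ∀ i' k, blkD M i' k * (∑ l, bstar (blkD M) k l * blkC M l) ≤
        ∑ l, bstar (blkD M) i' l * blkC M l := by
      intro i' k
      rw [Finset.mul_sum]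
      refine sum_le_of_forall_le _ _ _ fun l _ => ?_
      calc blkD M i' k * (bstar (blkD M) k l * blkC M l)
          = (blkD M i' k * bstar (blkD M) k l) * blkC M l := (mul_assoc _ _ _).symm
        _ ≤ bstar (blkD M) i' l * blkC M l := mul_le_mul_left (hdd1 i' l k) _
        _ ≤ _ := Finset.single_le_sum (f := fun l => bstar (blkD M) i' l * blkC M l)
            (fun _ _ => zero_le) (Finset.mem_univ l)
    refine Fin.cases ?_ ?_ i
    · refine Fin.cases ?_ ?_ j
      · -- (0,0)
        rw [bstar_00, Fin.sum_univ_succ, hM00]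
        refine add_le ((mul_le_mul_left haG _).trans hgf) ?_
        refine sum_le_of_forall_le _ _ _ fun k _ => ?_
        rw [hM0s, bstar_s0, ← mul_assoc]
        exact (mul_le_mul_left (hbCG k) _).trans hgf
      · -- (0, j'.succ)
        intro j'
        rw [bstar_0s, Fin.sum_univ_succ, hM00, bstar_0s, ← mul_assoc]
        refine add_le (mul_le_mul_left ((mul_le_mul_left haG _).trans hgf) _) ?_
        refine sum_le_of_forall_le _ _ _ fun k _ => ?_
        rw [hM0s, bstar_ss, mul_add]
        refine add_le ?_ ?_
        · refine le_trans ?_ (le_kstar_mul _ _)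
          exact Finset.single_le_sum (f := fun k => blkB M k * bstar (blkD M) k j')
            (fun _ _ => zero_le) (Finset.mem_univ k)
        · rw [show blkB M k * ((∑ l, bstar (blkD M) k l * blkC M l) *
              (blkA M + ∑ k, ∑ l, blkB M k * bstar (blkD M) k l * blkC M l)∗ *
              (∑ k, blkB M k * bstar (blkD M) k j'))
            = blkB M k * (∑ l, bstar (blkD M) k l * blkC M l) *
              (blkA M + ∑ k, ∑ l, blkB M k * bstar (blkD M) k l * blkC M l)∗ *
              (∑ k, blkB M k * bstar (blkD M) k j') by
            simp only [mul_assoc]]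
          exact mul_le_mul_left ((mul_le_mul_left (hbCG k) _).trans hgf) _
    · -- lower rows
      intro i'
      refine Fin.cases ?_ ?_ j
      · -- (i'.succ, 0)
        rw [bstar_s0, Fin.sum_univ_succ, hMs0, bstar_00]
        refine add_le (mul_le_mul_left (hcC i') _) ?_
        refine sum_le_of_forall_le _ _ _ fun k _ => ?_
        rw [hMss, bstar_s0, ← mul_assoc]
        exact mul_le_mul_left (hdC i' k) _
      · -- (i'.succ, j'.succ)
        intro j'
        rw [bstar_ss, Fin.sum_univ_succ, hMs0, bstar_0s, ← mul_assoc]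
        refine add_le ?_ ?_
        · exact le_trans (mul_le_mul_left (mul_le_mul_left (hcC i') _) _)
            (self_le_add_left _ _)
        · refine sum_le_of_forall_le _ _ _ fun k _ => ?_
          rw [hMss, bstar_ss, mul_add]
          refine add_le ((hdd1 i' j' k).trans (self_le_add_right _ _)) ?_
          refine le_trans ?_ (self_le_add_left _ _)
          rw [show blkD M i' k * ((∑ l, bstar (blkD M) k l * blkC M l) *
              (blkA M + ∑ k, ∑ l, blkB M k * bstar (blkD M) k l * blkC M l)∗ *
              (∑ k, blkB M k * bstar (blkD M) k j'))
            = blkD M i' k * (∑ l, bstar (blkD M) k l * blkC M l) *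
              (blkA M + ∑ k, ∑ l, blkB M k * bstar (blkD M) k l * blkC M l)∗ *
              (∑ k, blkB M k * bstar (blkD M) k j') by
            simp only [mul_assoc]]
          exact mul_le_mul_left (mul_le_mul_left (hdC i' k) _) _

theorem bstar_le : ∀ {n : ℕ} (M F : Matrix (Fin n) (Fin n) X),
    (∀ i, 1 ≤ F i i) → (∀ i j, M i j ≤ F i j) → (∀ i j k, F i j * F j k ≤ F i k) →
    ∀ i j, bstar M i j ≤ F i j := by
  intro n
  induction n with
  | zero => exact fun M F _ _ _ i => i.elim0
  | succ n ih =>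
    intro M F h1 hM htrans i j
    have hd'F : ∀ i' j', bstar (blkD M) i' j' ≤ F i'.succ j'.succ :=
      ih (blkD M) (Matrix.of fun i' j' => F i'.succ j'.succ) (fun i' => h1 i'.succ)
        (fun i' j' => hM i'.succ j'.succ) (fun i' j' k' => htrans i'.succ j'.succ k'.succ)
    have hgF : (blkA M + ∑ k, ∑ l, blkB M k * bstar (blkD M) k l * blkC M l) ≤ F 0 0 := by
      refine add_le (hM 0 0) ?_
      refine sum_le_of_forall_le _ _ _ fun k _ => ?_
      refine sum_le_of_forall_le _ _ _ fun l _ => ?_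
      calc blkB M k * bstar (blkD M) k l * blkC M l
          ≤ F 0 k.succ * F k.succ l.succ * F l.succ 0 :=
            mul_le_mul' (mul_le_mul' (hM 0 k.succ) (hd'F k l)) (hM l.succ 0)
        _ ≤ F 0 l.succ * F l.succ 0 := mul_le_mul_left (htrans _ _ _) _
        _ ≤ F 0 0 := htrans _ _ _
    have hfF : (blkA M + ∑ k, ∑ l, blkB M k * bstar (blkD M) k l * blkC M l)∗ ≤ F 0 0 := by
      refine kstar_le_of_mul_le_left (h1 0) ?_
      calc F 0 0 * (blkA M + ∑ k, ∑ l, blkB M k * bstar (blkD M) k l * blkC M l)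
          ≤ F 0 0 * F 0 0 := mul_le_mul_right hgF _
        _ ≤ F 0 0 := htrans _ _ _
    have hBF : ∀ j', (∑ k, blkB M k * bstar (blkD M) k j') ≤ F 0 j'.succ := by
      intro j'
      refine sum_le_of_forall_le _ _ _ fun k _ => ?_
      exact (mul_le_mul' (hM 0 k.succ) (hd'F k j')).trans (htrans _ _ _)
    have hCF : ∀ i', (∑ l, bstar (blkD M) i' l * blkC M l) ≤ F i'.succ 0 := by
      intro i'
      refine sum_le_of_forall_le _ _ _ fun l _ => ?_
      exact (mul_le_mul' (hd'F i' l) (hM l.succ 0)).trans (htrans _ _ _)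
    refine Fin.cases ?_ ?_ i
    · refine Fin.cases ?_ ?_ j
      · rw [bstar_00]; exact hfF
      · intro j'
        rw [bstar_0s]
        exact (mul_le_mul' hfF (hBF j')).trans (htrans _ _ _)
    · intro i'
      refine Fin.cases ?_ ?_ j
      · rw [bstar_s0]
        exact (mul_le_mul' (hCF i') hfF).trans (htrans _ _ _)
      · intro j'
        rw [bstar_ss]
        refine add_le (hd'F i' j') ?_
        calc (∑ l, bstar (blkD M) i' l * blkC M l) *
            (blkA M + ∑ k, ∑ l, blkB M k * bstar (blkD M) k l * blkC M l)∗ *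
            (∑ k, blkB M k * bstar (blkD M) k j')
            ≤ F i'.succ 0 * F 0 0 * F 0 j'.succ :=
              mul_le_mul' (mul_le_mul' (hCF i') hfF) (hBF j')
          _ ≤ F i'.succ 0 * F 0 j'.succ := mul_le_mul_left (htrans _ _ _) _
          _ ≤ F i'.succ j'.succ := htrans _ _ _

end BStar

open Computability

section MapAndBridge
variable {A : Type}

def RegexQ.letter (p : A) : RegexQ A := ⟦Regex.letter p⟧

@[simp] lemma RegexQ.evalQ_letter {X : Type} [KleeneAlgebra X] (σ : A → X) (p : A) :
    RegexQ.evalQ σ (RegexQ.letter p) = σ p := rfl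

lemma mId_diag {ι : Type} [DecidableEq ι] (i : ι) :
    (mId ι : Matrix ι ι (RegexQ A)) i i = 1 := by
  show (if i = i then RegexQ.one else RegexQ.zero) = 1
  rw [if_pos rfl]; rfl

lemma mId_off {ι : Type} [DecidableEq ι] {i j : ι} (h : i ≠ j) :
    (mId ι : Matrix ι ι (RegexQ A)) i j = 0 := by
  show (if i = j then RegexQ.one else RegexQ.zero) = 0
  rw [if_neg h]; rfl

/-- `lang` is evaluation at the letter interpretation. -/
lemma RegexQ.lang_eq :
    (RegexQ.lang : RegexQ A → Language A)
      = RegexQ.evalQ (fun p => ({[p]} : Language A)) := rfl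

lemma RegexQ.evalQ_finsum {X : Type} [KleeneAlgebra X] (σ : A → X) {ι : Type}
    (s : Finset ι) (f : ι → RegexQ A) :
    RegexQ.evalQ σ (∑ i ∈ s, f i) = ∑ i ∈ s, RegexQ.evalQ σ (f i) := by
  classical
  induction s using Finset.induction with
  | empty => simp
  | insert _ _ hx ih => rw [Finset.sum_insert hx, Finset.sum_insert hx, RegexQ.evalQ_add, ih]

lemma RegexQ.qsum_eq (l : List (RegexQ A)) : RegexQ.sum l = l.sum := by
  induction l with
  | nil => rfl
  | cons a l ih => rw [List.sum_cons, ← ih]; rfl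

lemma RegexQ.evalQ_list_sum {X : Type} [KleeneAlgebra X] (σ : A → X)
    (l : List (RegexQ A)) :
    RegexQ.evalQ σ l.sum = (l.map (RegexQ.evalQ σ)).sum := by
  induction l with
  | nil => simp
  | cons a l ih => rw [List.sum_cons, RegexQ.evalQ_add, ih, List.map_cons, List.sum_cons]

lemma mem_le_list_sum {X : Type} [KleeneAlgebra X] {a : X} {l : List X}
    (h : a ∈ l) : a ≤ l.sum := by
  induction l with
  | nil => exact absurd h List.not_mem_nil
  | cons b l ih =>
    rw [List.sum_cons]
    rcases List.mem_cons.mp h with rfl | h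
    · exact self_le_add_right _ _
    · exact (ih h).trans (self_le_add_left _ _)

lemma mem_list_sum_lang {w : List A} {l : List (Language A)}
    (h : w ∈ l.sum) : ∃ L ∈ l, w ∈ L := by
  induction l with
  | nil => exact absurd h (Language.notMem_zero w)
  | cons L l ih =>
    rw [List.sum_cons] at h
    rcases (Language.mem_add _ _ _).mp h with h | h
    · exact ⟨L, List.mem_cons_self, h⟩
    · obtain ⟨L', hL', hw⟩ := ih h
      exact ⟨L', List.mem_cons_of_mem _ hL', hw⟩

lemma mem_finsum_lang {w : List A} {ι : Type} {s : Finset ι} {f : ι → Language A} :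
    w ∈ (∑ i ∈ s, f i) ↔ ∃ i ∈ s, w ∈ f i := by
  classical
  induction s using Finset.induction with
  | empty => simp [Language.notMem_zero]
  | insert _ _ hx ih =>
    rw [Finset.sum_insert hx]
    rw [Language.mem_add, ih]
    constructor
    · rintro (h | ⟨i, hi, h⟩)
      · exact ⟨_, Finset.mem_insert_self _ _, h⟩
      · exact ⟨i, Finset.mem_insert_of_mem hi, h⟩
    · rintro ⟨i, hi, h⟩
      rcases Finset.mem_insert.mp hi with rfl | hi
      · exact Or.inl h
      · exact Or.inr ⟨i, hi, h⟩

lemma mMul_apply {ι κ l : Type} [Fintype κ] (M : Matrix ι κ (RegexQ A))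
    (N : Matrix κ l (RegexQ A)) (i : ι) (j : l) :
    mMul M N i j = ∑ k, M i k * N k j := by
  show RegexQ.sum ((Finset.univ.toList (α := κ)).map fun k => (M i k).mul (N k j)) = _
  rw [RegexQ.qsum_eq, Finset.sum_map_toList]
  rfl

lemma mAdd_apply {ι κ : Type} (M N : Matrix ι κ (RegexQ A)) (i : ι) (j : κ) :
    mAdd M N i j = M i j + N i j := rfl

/-- Evaluation commutes with the matrix star. -/
lemma evalQ_bstar {X : Type} [KleeneAlgebra X] (σ : A → X) :
    ∀ {n : ℕ} (M : Matrix (Fin n) (Fin n) (RegexQ A)) (i j : Fin n),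
    RegexQ.evalQ σ (bstar M i j)
      = bstar (Matrix.of fun i j => RegexQ.evalQ σ (M i j)) i j := by
  intro n
  induction n with
  | zero => exact fun M i => i.elim0
  | succ n ih =>
    intro M i j
    set M' : Matrix (Fin (n+1)) (Fin (n+1)) X :=
      Matrix.of fun i j => RegexQ.evalQ σ (M i j) with hM'
    have hD : (blkD M' : Matrix (Fin n) (Fin n) X)
        = Matrix.of fun i j => RegexQ.evalQ σ (blkD M i j) := rfl
    have hbd : ∀ k l, RegexQ.evalQ σ (bstar (blkD M) k l) = bstar (blkD M') k l := by
      intro k l; rw [ih (blkD M) k l, ← hD]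
    have hA : RegexQ.evalQ σ (blkA M) = blkA M' := rfl
    have hB0 : ∀ k, RegexQ.evalQ σ (blkB M k) = blkB M' k := fun _ => rfl
    have hC0 : ∀ k, RegexQ.evalQ σ (blkC M k) = blkC M' k := fun _ => rfl
    have hB : ∀ j', RegexQ.evalQ σ (∑ k, blkB M k * bstar (blkD M) k j')
        = ∑ k, blkB M' k * bstar (blkD M') k j' := by
      intro j'
      rw [RegexQ.evalQ_finsum]
      exact Finset.sum_congr rfl fun k _ => by
        rw [RegexQ.evalQ_mul, hbd, hB0]
    have hC : ∀ i', RegexQ.evalQ σ (∑ l, bstar (blkD M) i' l * blkC M l)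
        = ∑ l, bstar (blkD M') i' l * blkC M' l := by
      intro i'
      rw [RegexQ.evalQ_finsum]
      exact Finset.sum_congr rfl fun l _ => by
        rw [RegexQ.evalQ_mul, hbd, hC0]
    have hg : RegexQ.evalQ σ (blkA M + ∑ k, ∑ l, blkB M k * bstar (blkD M) k l * blkC M l)
        = blkA M' + ∑ k, ∑ l, blkB M' k * bstar (blkD M') k l * blkC M' l := by
      rw [RegexQ.evalQ_add, hA, RegexQ.evalQ_finsum]
      congr 1
      refine Finset.sum_congr rfl fun k _ => ?_
      rw [RegexQ.evalQ_finsum]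
      refine Finset.sum_congr rfl fun l _ => ?_
      rw [RegexQ.evalQ_mul, RegexQ.evalQ_mul, hbd, hB0, hC0]
    refine Fin.cases ?_ ?_ i
    · refine Fin.cases ?_ ?_ j
      · rw [bstar_00, bstar_00, RegexQ.evalQ_star, hg]
      · intro j'
        rw [bstar_0s, bstar_0s, RegexQ.evalQ_mul, RegexQ.evalQ_star, hg, hB]
    · intro i'
      refine Fin.cases ?_ ?_ j
      · rw [bstar_s0, bstar_s0, RegexQ.evalQ_mul, RegexQ.evalQ_star, hg, hC]
      · intro j'
        rw [bstar_ss, bstar_ss, RegexQ.evalQ_add, RegexQ.evalQ_mul, RegexQ.evalQ_mul,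
          RegexQ.evalQ_star, hg, hB, hC, hbd]

end MapAndBridge


/-- The language interpretation of the matricial evaluation of a DFA equals
the language recognised by that DFA: `R(u·M*·v)` is the set of accepted
words (the matrix star being any operation making square matrices of
regular expressions a Kleene algebra). -/
theorem dfa_eval_lang {A : Type} [Fintype A] [DecidableEq A] {n : ℕ}
    (step : Fin n → A → Fin n) (start : Fin n) (accept : Fin n → Bool)
    (S : Matrix (Fin n) (Fin n) (RegexQ A) → Matrix (Fin n) (Fin n) (RegexQ A))
    (hS : IsKleeneAlgebra mAdd mMul S (mId (Fin n)) (mZero (Fin n) (Fin n))) :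
    RegexQ.lang (mMul (mMul (dfaU start) (S (dfaM step))) (dfaV accept) 0 0)
      = {w : List A | dfaAccepts step start accept w} := by
  classical
  set σL : A → Language A := fun p => {[p]} with hσL
  set N : Matrix (Fin n) (Fin n) (RegexQ A) := dfaM step with hN
  set T : Matrix (Fin n) (Fin n) (RegexQ A) := S (dfaM step) with hT
  -- consequences of the unfolding axiom
  have hUnfold := hS.star_unfold (dfaM step)
  have hEntry : ∀ i j : Fin n,
      (mId (Fin n) i j + mMul N T i j) + T i j = T i j := by
    intro i j
    have := congrFun (congrFun hUnfold i) j
    exact this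
  have h1T : ∀ i : Fin n, (1 : RegexQ A) ≤ T i i := by
    intro i
    have h := hEntry i i
    have h1 : (1 : RegexQ A) ≤ (mId (Fin n) i i + mMul N T i i) + T i i := by
      calc (1 : RegexQ A) = mId (Fin n) i i := (mId_diag i).symm
        _ ≤ mId (Fin n) i i + mMul N T i i := self_le_add_right _ _
        _ ≤ _ := self_le_add_right _ _
    rwa [h] at h1
  have hNT : ∀ i j k : Fin n, N i k * T k j ≤ T i j := by
    intro i j k
    have h := hEntry i j
    have h1 : N i k * T k j ≤ (mId (Fin n) i j + mMul N T i j) + T i j := by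
      calc N i k * T k j ≤ ∑ k, N i k * T k j :=
            Finset.single_le_sum (f := fun k => N i k * T k j)
              (fun _ _ => zero_le) (Finset.mem_univ k)
        _ = mMul N T i j := (mMul_apply N T i j).symm
        _ ≤ mId (Fin n) i j + mMul N T i j := self_le_add_left _ _
        _ ≤ _ := self_le_add_right _ _
    rwa [h] at h1
  -- every accepted path's word is in the language of the corresponding entry
  have hmem : ∀ (w : List A) (i : Fin n), w ∈ RegexQ.lang (T i (w.foldl step i)) := by
    intro w
    induction w with
    | nil =>
      intro i
      have := RegexQ.eval_le σL (h1T i)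
      rw [RegexQ.lang_eq]
      exact this (by rw [RegexQ.evalQ_one]; exact Language.nil_mem_one)
    | cons p w ih =>
      intro i
      have hp : [p] ∈ RegexQ.lang (N i (step i p)) := by
        rw [RegexQ.lang_eq, hN]
        have hmem' : RegexQ.letter p ≤ dfaM step i (step i p) := by
          show RegexQ.letter p ≤ RegexQ.sum _
          rw [RegexQ.qsum_eq]
          refine mem_le_list_sum ?_
          refine List.mem_map.mpr ⟨p, ?_, rfl⟩
          rw [Finset.mem_toList, Finset.mem_filter]
          exact ⟨Finset.mem_univ p, rfl⟩
        have := RegexQ.eval_le σL hmem'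
        exact this (by simp only [RegexQ.evalQ_letter, hσL]; exact Set.mem_singleton _)
      have hw : w ∈ RegexQ.lang (T (step i p) (w.foldl step (step i p))) := ih (step i p)
      have hprod : ([p] ++ w) ∈
          RegexQ.lang (N i (step i p) * T (step i p) (w.foldl step (step i p))) := by
        rw [RegexQ.lang_eq, RegexQ.evalQ_mul]
        exact Language.append_mem_mul hp hw
      have hle := RegexQ.eval_le σL (hNT i (w.foldl step (step i p)) (step i p))
      rw [RegexQ.lang_eq]
      exact hle hprod
  -- the matrix star over `RegexQ` dominates `T`
  set x : Matrix (Fin n) (Fin n) (RegexQ A) := bstar N with hx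
  have hxfix : mAdd (mMul N x) x = x := by
    funext i j
    show mMul N x i j + x i j = x i j
    rw [mMul_apply]
    exact mul_bstar_le N i j
  have hTx : mAdd (mMul T x) x = x := hS.star_ind_left x N hxfix
  have hIdx : mAdd (mId (Fin n)) x = x := by
    funext i j
    show mId (Fin n) i j + x i j = x i j
    by_cases h : i = j
    · subst h
      rw [mId_diag]
      exact one_le_bstar N i
    · rw [mId_off h, zero_add]
  have h2 : mMul T x = mAdd T (mMul T x) := by
    conv_lhs => rw [← hIdx, hS.left_distrib, hS.mul_one]
  have key : mAdd T x = x := by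
    calc mAdd T x = mAdd T (mAdd (mMul T x) x) := by rw [hTx]
      _ = mAdd (mAdd T (mMul T x)) x := (hS.add_assoc _ _ _).symm
      _ = mAdd (mMul T x) x := by rw [← h2]
      _ = x := hTx
  have hTlex : ∀ i j : Fin n, T i j ≤ x i j := by
    intro i j
    show T i j + x i j = x i j
    exact congrFun (congrFun key i) j
  -- the language of `x` is bounded by reachability
  set F : Matrix (Fin n) (Fin n) (Language A) :=
    Matrix.of fun i j => {w : List A | w.foldl step i = j} with hF
  have hNF : ∀ i j : Fin n, RegexQ.evalQ σL (N i j) ≤ F i j := by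
    intro i j w hw
    rw [hN] at hw
    have : RegexQ.evalQ σL (dfaM step i j)
        = ((((Finset.univ.filter fun p => step i p = j).toList).map
            fun p => (⟦Regex.letter p⟧ : RegexQ A)).map (RegexQ.evalQ σL)).sum := by
      show RegexQ.evalQ σL (RegexQ.sum _) = _
      rw [RegexQ.qsum_eq, RegexQ.evalQ_list_sum]
      rfl
    rw [this] at hw
    obtain ⟨L, hL, hwL⟩ := mem_list_sum_lang hw
    obtain ⟨q, hq, rfl⟩ := List.mem_map.mp hL
    obtain ⟨p, hp, rfl⟩ := List.mem_map.mp hq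
    rw [Finset.mem_toList, Finset.mem_filter] at hp
    have : w = [p] := by simp only [hσL, Regex.eval] at hwL; exact hwL
    subst this
    show [p].foldl step i = j
    simpa using hp.2
  have h1F : ∀ i : Fin n, (1 : Language A) ≤ F i i := by
    intro i w hw
    change w ∈ (1 : Language A) at hw
    rw [Language.mem_one] at hw
    subst hw
    show List.foldl step i [] = i
    rfl
  have hFF : ∀ i j k : Fin n, F i j * F j k ≤ F i k := by
    intro i j k w hw
    change w ∈ (F i j * F j k : Language A) at hw
    rw [Language.mem_mul] at hw
    obtain ⟨u, hu, v, hv, rfl⟩ := hw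
    show (u ++ v).foldl step i = k
    rw [List.foldl_append]
    have hu' : u.foldl step i = j := hu
    have hv' : v.foldl step j = k := hv
    rw [hu', hv']
  have hxF : ∀ i j : Fin n, RegexQ.evalQ σL (x i j) ≤ F i j := by
    intro i j
    rw [hx, evalQ_bstar]
    exact bstar_le (Matrix.of fun i j => RegexQ.evalQ σL (N i j)) F h1F
      (fun i j => hNF i j) hFF i j
  have hTF : ∀ i j : Fin n, RegexQ.lang (T i j) ≤ F i j := by
    intro i j
    rw [RegexQ.lang_eq]
    exact (RegexQ.eval_le σL (hTlex i j)).trans (hxF i j)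
  -- compute the final entry
  have hentry : mMul (mMul (dfaU start) T) (dfaV accept) 0 0
      = ∑ j : Fin n, if accept j then T start j else 0 := by
    rw [mMul_apply]
    refine Finset.sum_congr rfl fun j _ => ?_
    have hUT : mMul (dfaU start) T 0 j = T start j := by
      rw [mMul_apply]
      have : ∀ k : Fin n, dfaU start 0 k * T k j = if k = start then T k j else 0 := by
        intro k
        show (if k = start then (1 : RegexQ A) else 0) * T k j = _
        by_cases h : k = start <;> simp [h]
      rw [Finset.sum_congr rfl fun k _ => this k, Finset.sum_ite_eq' Finset.univ start
        (fun k => T k j)]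
      simp
    rw [hUT]
    show T start j * (if accept j then (1 : RegexQ A) else 0) = _
    by_cases h : accept j <;> simp [h]
  rw [hentry]
  ext w
  rw [RegexQ.lang_eq, RegexQ.evalQ_finsum]
  constructor
  · intro hw
    rw [mem_finsum_lang] at hw
    obtain ⟨j, _, hj⟩ := hw
    by_cases h : accept j = true
    · rw [if_pos h] at hj
      have := hTF start j (by rw [RegexQ.lang_eq]; exact hj)
      have hfold : w.foldl step start = j := this
      show accept (w.foldl step start) = true
      rw [hfold]
      exact h
    · rw [if_neg h] at hj
      rw [RegexQ.evalQ_zero] at hj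
      exact absurd hj (Language.notMem_zero w)
  · intro hw
    rw [mem_finsum_lang]
    refine ⟨w.foldl step start, Finset.mem_univ _, ?_⟩
    have h : accept (w.foldl step start) = true := hw
    rw [if_pos h]
    have := hmem w start
    rw [RegexQ.lang_eq] at this
    exact this
end

section
/- If R is a bisimulation between finite sets of KAT expressions and X R Y, then the guarded-string languages of X and Y coincide: G(X) = G(Y), where G(X) = ⋃_{x∈X} G(x). -/
/-- Boolean expressions over primitive tests `T`. -/
inductive BExp (T : Type) : Type
  | var : T → BExp T
  | and : BExp T → BExp T → BExp T
  | or : BExp T → BExp T → BExp T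
  | not : BExp T → BExp T
  | top : BExp T
  | bot : BExp T

/-- An atom assigns a Boolean value to each primitive test. -/
def Atom (T : Type) := T → Bool

/-- Satisfaction of a Boolean expression by an atom. -/
def BExp.sat {T : Type} (α : Atom T) : BExp T → Bool
  | .var t => α t
  | .and a b => a.sat α && b.sat α
  | .or a b => a.sat α || b.sat α
  | .not a => !a.sat α
  | .top => true
  | .bot => false

/-- KAT expressions over letters `A` and primitive tests `T`. -/
inductive KATExp (T A : Type) : Type
  | letter : A → KATExp T A
  | test : BExp T → KATExp T A
  | zero : KATExp T A
  | one : KATExp T A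
  | plus : KATExp T A → KATExp T A → KATExp T A
  | mul : KATExp T A → KATExp T A → KATExp T A
  | star : KATExp T A → KATExp T A

/-- Guarded strings: an atom followed by a list of (letter, atom) pairs. -/
def GS (T A : Type) := Atom T × List (A × Atom T)

def GS.lastAtom {T A : Type} (u : GS T A) : Atom T :=
  (u.2.map Prod.snd).getLastD u.1

/-- Partial concatenation of guarded strings. -/
def GS.cat {T A : Type} [DecidableEq (Atom T)] (u v : GS T A) :
    Option (GS T A) :=
  if u.lastAtom = v.1 then some (u.1, u.2 ++ v.2) else none

def gsCat {T A : Type} [DecidableEq (Atom T)] (x y : Set (GS T A)) :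
    Set (GS T A) :=
  {w | ∃ u ∈ x, ∃ v ∈ y, u.cat v = some w}

def gsPow {T A : Type} [DecidableEq (Atom T)] (x : Set (GS T A)) :
    ℕ → Set (GS T A)
  | 0 => {u | u.2 = []}
  | n + 1 => gsCat x (gsPow x n)

/-- The guarded-string language interpretation of KAT expressions. -/
def gsLang {T A : Type} [DecidableEq (Atom T)] : KATExp T A → Set (GS T A)
  | .letter p => {u | ∃ α β, u = (α, [(p, β)])}
  | .test a => {u | u.2 = [] ∧ a.sat u.1 = true}
  | .zero => ∅
  | .one => {u | u.2 = []}
  | .plus x y => gsLang x ∪ gsLang y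
  | .mul x y => gsCat (gsLang x) (gsLang y)
  | .star x => ⋃ n : ℕ, gsPow (gsLang x) n

/-- `ε_α(x)`: does `x` accept the single atom `α`? -/
def eps {T A : Type} (α : Atom T) : KATExp T A → Bool
  | .letter _ => false
  | .test a => a.sat α
  | .zero => false
  | .one => true
  | .plus x y => eps α x || eps α y
  | .mul x y => eps α x && eps α y
  | .star _ => true

/-- The Brzozowski derivative `δ_{α,p}` of a KAT expression. -/
def katDeriv {T A : Type} [DecidableEq A] (α : Atom T) (p : A) :
    KATExp T A → KATExp T A
  | .letter q => if p = q then .one else .zero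
  | .test _ => .zero
  | .zero => .zero
  | .one => .zero
  | .plus x y => .plus (katDeriv α p x) (katDeriv α p y)
  | .mul x y =>
      if eps α x then .plus (.mul (katDeriv α p x) y) (katDeriv α p y)
      else .mul (katDeriv α p x) y
  | .star x => .mul (katDeriv α p x) (.star x)

/-- The Antimirov partial derivative `δ'_{α,p}`, returning a finite set
(list) of expressions. -/
def katPDeriv {T A : Type} [DecidableEq A] (α : Atom T) (p : A) :
    KATExp T A → List (KATExp T A)
  | .letter q => if p = q then [.one] else []
  | .test _ => []
  | .zero => []
  | .one => []
  | .plus x y => katPDeriv α p x ++ katPDeriv α p y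
  | .mul x y =>
      if eps α x then (katPDeriv α p x).map (KATExp.mul · y) ++ katPDeriv α p y
      else (katPDeriv α p x).map (KATExp.mul · y)
  | .star x => (katPDeriv α p x).map (KATExp.mul · (.star x))

/-- `ε_α` of a finite set of expressions. -/
def epsL {T A : Type} (α : Atom T) (X : List (KATExp T A)) : Bool :=
  X.any (eps α)

/-- Partial derivative of a finite set of expressions. -/
def katPDerivL {T A : Type} [DecidableEq A] (α : Atom T) (p : A)
    (X : List (KATExp T A)) : List (KATExp T A) :=
  (X.map (katPDeriv α p)).flatten

/-- Guarded-string language of a finite set of expressions. -/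
def gsLangL {T A : Type} [DecidableEq (Atom T)] (X : List (KATExp T A)) :
    Set (GS T A) :=
  {u | ∃ x ∈ X, u ∈ gsLang x}


section Aux
set_option linter.unusedSectionVars false
variable {T A : Type} [DecidableEq (Atom T)] [DecidableEq A]

lemma lastAtom_nil (α : Atom T) :
    GS.lastAtom ((α, ([] : List (A × Atom T))) : GS T A) = α := rfl

lemma lastAtom_cons (α β : Atom T) (p : A) (l : List (A × Atom T)) :
    GS.lastAtom ((α, (p,β)::l) : GS T A) = GS.lastAtom ((β, l) : GS T A) := by
  show (((p,β)::l).map Prod.snd).getLastD α = (l.map Prod.snd).getLastD β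
  rw [List.map_cons, List.getLastD_cons]

lemma mem_gsCat {S1 S2 : Set (GS T A)} {γ : Atom T} {l : List (A × Atom T)} :
    ((γ, l) : GS T A) ∈ gsCat S1 S2 ↔
      ∃ l1 l2, l = l1 ++ l2 ∧ ((γ, l1) : GS T A) ∈ S1 ∧
        ((GS.lastAtom ((γ, l1) : GS T A), l2) : GS T A) ∈ S2 := by
  constructor
  · intro h
    have h' : ∃ u ∈ S1, ∃ v ∈ S2, GS.cat u v = some ((γ, l) : GS T A) := h
    obtain ⟨⟨γ', lu⟩, hu, ⟨δ, lv⟩, hv, hcat⟩ := h'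
    unfold GS.cat at hcat
    split at hcat
    · rename_i hlast
      have heq := Option.some.inj hcat
      have h1 : γ = γ' := (congrArg Prod.fst heq).symm
      have h2 : lu ++ lv = l := congrArg Prod.snd heq
      subst h1
      subst h2
      refine ⟨lu, lv, rfl, hu, ?_⟩
      have hδ : GS.lastAtom ((γ, lu) : GS T A) = δ := hlast
      rw [hδ]
      exact hv
    · exact absurd hcat (by simp)
  · rintro ⟨l1, l2, rfl, h1, h2⟩
    have hcond : GS.lastAtom ((γ, l1) : GS T A)
        = ((GS.lastAtom ((γ, l1) : GS T A), l2) : GS T A).1 := rfl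
    have hc : GS.cat ((γ, l1) : GS T A)
        ((GS.lastAtom ((γ, l1) : GS T A), l2) : GS T A)
        = some ((γ, l1 ++ l2) : GS T A) := by
      unfold GS.cat
      rw [if_pos hcond]
      rfl
    show ∃ u ∈ S1, ∃ v ∈ S2, GS.cat u v = some ((γ, l1 ++ l2) : GS T A)
    exact ⟨((γ, l1) : GS T A), h1,
      ((GS.lastAtom ((γ, l1) : GS T A), l2) : GS T A), h2, hc⟩

lemma mem_gsCat_nil {S1 S2 : Set (GS T A)} {α : Atom T} :
    ((α, ([] : List (A × Atom T))) : GS T A) ∈ gsCat S1 S2 ↔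
      ((α, ([] : List (A × Atom T))) : GS T A) ∈ S1 ∧
      ((α, ([] : List (A × Atom T))) : GS T A) ∈ S2 := by
  constructor
  · intro h
    obtain ⟨l1, l2, heq, h1, h2⟩ := mem_gsCat.mp h
    cases l1 with
    | cons hd tl => exact absurd heq (by simp)
    | nil =>
      cases l2 with
      | cons hd tl => exact absurd heq (by simp)
      | nil =>
        rw [lastAtom_nil] at h2
        exact ⟨h1, h2⟩
  · rintro ⟨h1, h2⟩
    refine mem_gsCat.mpr ⟨[], [], rfl, h1, ?_⟩
    rw [lastAtom_nil]
    exact h2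

lemma mem_gsCat_cons {S1 S2 : Set (GS T A)} {α β : Atom T} {p : A}
    {l : List (A × Atom T)} :
    ((α, (p,β)::l) : GS T A) ∈ gsCat S1 S2 ↔
      ((((α, ([] : List (A × Atom T))) : GS T A) ∈ S1 ∧
        ((α, (p,β)::l) : GS T A) ∈ S2) ∨
      ∃ l1 l2, l = l1 ++ l2 ∧ ((α, (p,β)::l1) : GS T A) ∈ S1 ∧
        ((GS.lastAtom ((β, l1) : GS T A), l2) : GS T A) ∈ S2) := by
  constructor
  · intro h
    obtain ⟨l1, l2, heq, h1, h2⟩ := mem_gsCat.mp h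
    cases l1 with
    | nil =>
      left
      rw [List.nil_append] at heq
      subst heq
      rw [lastAtom_nil] at h2
      exact ⟨h1, h2⟩
    | cons hd l1' =>
      right
      rw [List.cons_append] at heq
      injection heq with h3 h4
      subst h3
      subst h4
      rw [lastAtom_cons] at h2
      exact ⟨l1', l2, rfl, h1, h2⟩
  · rintro (⟨h1, h2⟩ | ⟨l1, l2, rfl, h1, h2⟩)
    · refine mem_gsCat.mpr ⟨[], (p,β)::l, rfl, h1, ?_⟩
      rw [lastAtom_nil]
      exact h2
    · refine mem_gsCat.mpr ⟨(p,β)::l1, l2, rfl, h1, ?_⟩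
      rw [lastAtom_cons]
      exact h2

lemma pow_cons_decomp {S : Set (GS T A)} :
    ∀ (n : ℕ) (α β : Atom T) (p : A) (l : List (A × Atom T)),
    ((α,(p,β)::l) : GS T A) ∈ gsPow S n →
    ∃ l1 l2, l = l1 ++ l2 ∧ ((α,(p,β)::l1) : GS T A) ∈ S ∧
      ((GS.lastAtom ((β,l1) : GS T A), l2) : GS T A) ∈ ⋃ m : ℕ, gsPow S m := by
  intro n
  induction n with
  | zero =>
    intro α β p l h
    exact absurd (h : ((p,β)::l : List (A × Atom T)) = ([] : List (A × Atom T)))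
      (List.cons_ne_nil _ _)
  | succ n ih =>
    intro α β p l h
    have h' : ((α,(p,β)::l) : GS T A) ∈ gsCat S (gsPow S n) := h
    rcases mem_gsCat_cons.mp h' with ⟨h1, h2⟩ | ⟨l1, l2, rfl, h1, h2⟩
    · exact ih α β p l h2
    · exact ⟨l1, l2, rfl, h1, Set.mem_iUnion.mpr ⟨n, h2⟩⟩

lemma mem_star_cons {S : Set (GS T A)} {α β : Atom T} {p : A}
    {l : List (A × Atom T)} :
    ((α,(p,β)::l) : GS T A) ∈ (⋃ n : ℕ, gsPow S n) ↔
      ∃ l1 l2, l = l1 ++ l2 ∧ ((α,(p,β)::l1) : GS T A) ∈ S ∧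
        ((GS.lastAtom ((β,l1) : GS T A), l2) : GS T A) ∈ ⋃ n : ℕ, gsPow S n := by
  constructor
  · intro h
    obtain ⟨n, h⟩ := Set.mem_iUnion.mp h
    exact pow_cons_decomp n α β p l h
  · rintro ⟨l1, l2, rfl, h1, h2⟩
    obtain ⟨m, h2⟩ := Set.mem_iUnion.mp h2
    refine Set.mem_iUnion.mpr ⟨m + 1, ?_⟩
    exact mem_gsCat_cons.mpr (Or.inr ⟨l1, l2, rfl, h1, h2⟩)

lemma mem_gsLang_nil (x : KATExp T A) : ∀ α : Atom T,
    ((α, ([] : List (A × Atom T))) : GS T A) ∈ gsLang x ↔ eps α x = true := by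
  induction x with
  | letter q =>
    intro α
    constructor
    · intro h
      have h' : ∃ α' γ, ((α, ([] : List (A × Atom T))) : GS T A)
          = ((α', [(q, γ)]) : GS T A) := h
      obtain ⟨α', γ, h'⟩ := h'
      exact absurd (congrArg Prod.snd h') (by simp)
    · intro h
      exact absurd h (by simp [eps])
  | test a =>
    intro α
    constructor
    · intro h
      have h' : ((α, ([] : List (A × Atom T))) : GS T A).2 = []
          ∧ BExp.sat ((α, ([] : List (A × Atom T))) : GS T A).1 a = true := h
      exact h'.2
    · intro h
      show ((α, ([] : List (A × Atom T))) : GS T A).2 = []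
          ∧ BExp.sat ((α, ([] : List (A × Atom T))) : GS T A).1 a = true
      exact ⟨rfl, h⟩
  | zero =>
    intro α
    exact ⟨fun h => absurd h (Set.notMem_empty _),
      fun h => absurd h (by simp [eps])⟩
  | one =>
    intro α
    constructor
    · intro _; rfl
    · intro _
      show ((α, ([] : List (A × Atom T))) : GS T A).2 = []
      rfl
  | plus x y ihx ihy =>
    intro α
    constructor
    · intro h
      have h' : ((α, ([] : List (A × Atom T))) : GS T A) ∈ gsLang x
          ∨ ((α, ([] : List (A × Atom T))) : GS T A) ∈ gsLang y := h
      show (eps α x || eps α y) = true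
      rcases h' with h' | h'
      · simp [(ihx α).mp h']
      · simp [(ihy α).mp h']
    · intro h
      have h' : eps α x = true ∨ eps α y = true := by
        simpa [eps] using h
      rcases h' with h' | h'
      · exact Or.inl ((ihx α).mpr h')
      · exact Or.inr ((ihy α).mpr h')
  | mul x y ihx ihy =>
    intro α
    constructor
    · intro h
      obtain ⟨h1, h2⟩ := mem_gsCat_nil.mp h
      show (eps α x && eps α y) = true
      simp [(ihx α).mp h1, (ihy α).mp h2]
    · intro h
      have h' : eps α x = true ∧ eps α y = true := by
        simpa [eps] using h
      exact mem_gsCat_nil.mpr ⟨(ihx α).mpr h'.1, (ihy α).mpr h'.2⟩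
  | star x ih =>
    intro α
    constructor
    · intro _; rfl
    · intro _
      refine Set.mem_iUnion.mpr ⟨0, ?_⟩
      show ((α, ([] : List (A × Atom T))) : GS T A).2 = []
      rfl

lemma mem_gsLang_cons (x : KATExp T A) :
    ∀ (α β : Atom T) (p : A) (l : List (A × Atom T)),
    ((α,(p,β)::l) : GS T A) ∈ gsLang x ↔
      ∃ y ∈ katPDeriv α p x, ((β,l) : GS T A) ∈ gsLang y := by
  induction x with
  | letter q =>
    intro α β p l
    constructor
    · intro h
      have h' : ∃ α' γ, ((α,(p,β)::l) : GS T A) = ((α', [(q, γ)]) : GS T A) := h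
      obtain ⟨α', γ, h'⟩ := h'
      have h2 : (p,β)::l = [(q,γ)] := congrArg Prod.snd h'
      obtain ⟨⟨hpq, hbg⟩, hl⟩ : (p = q ∧ β = γ) ∧ l = [] := by
        simpa [Prod.ext_iff] using h2
      subst hpq
      subst hbg
      subst hl
      refine ⟨.one, ?_, ?_⟩
      · show KATExp.one ∈ katPDeriv α p (KATExp.letter p : KATExp T A)
        simp [katPDeriv]
      · show ((β, ([] : List (A × Atom T))) : GS T A).2 = []
        rfl
    · rintro ⟨y, hy, hm⟩
      by_cases hpq : p = q
      · subst hpq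
        have hy' : y = KATExp.one := by simpa [katPDeriv] using hy
        subst hy'
        have hl : l = [] := hm
        subst hl
        show ∃ α' γ, ((α,[(p,β)]) : GS T A) = ((α', [(p, γ)]) : GS T A)
        exact ⟨α, β, rfl⟩
      · have : y ∈ ([] : List (KATExp T A)) := by simpa [katPDeriv, hpq] using hy
        simp at this
  | test a =>
    intro α β p l
    constructor
    · intro h
      have h' : ((α,(p,β)::l) : GS T A).2 = []
          ∧ BExp.sat ((α,(p,β)::l) : GS T A).1 a = true := h
      exact absurd h'.1 (by simp)
    · rintro ⟨y, hy, hm⟩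
      have : y ∈ ([] : List (KATExp T A)) := hy
      simp at this
  | zero =>
    intro α β p l
    constructor
    · intro h
      exact absurd h (Set.notMem_empty _)
    · rintro ⟨y, hy, hm⟩
      have : y ∈ ([] : List (KATExp T A)) := hy
      simp at this
  | one =>
    intro α β p l
    constructor
    · intro h
      exact absurd (h : ((p,β)::l : List (A × Atom T)) = ([] : List (A × Atom T)))
        (List.cons_ne_nil _ _)
    · rintro ⟨y, hy, hm⟩
      have : y ∈ ([] : List (KATExp T A)) := hy
      simp at this
  | plus x y ihx ihy =>
    intro α β p l
    constructor
    · intro h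
      have h' : ((α,(p,β)::l) : GS T A) ∈ gsLang x
          ∨ ((α,(p,β)::l) : GS T A) ∈ gsLang y := h
      rcases h' with h' | h'
      · obtain ⟨z, hz, hm⟩ := (ihx α β p l).mp h'
        exact ⟨z, List.mem_append.mpr (Or.inl hz), hm⟩
      · obtain ⟨z, hz, hm⟩ := (ihy α β p l).mp h'
        exact ⟨z, List.mem_append.mpr (Or.inr hz), hm⟩
    · rintro ⟨z, hz, hm⟩
      have hz' : z ∈ katPDeriv α p x ++ katPDeriv α p y := hz
      rcases List.mem_append.mp hz' with h' | h'
      · exact Or.inl ((ihx α β p l).mpr ⟨z, h', hm⟩)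
      · exact Or.inr ((ihy α β p l).mpr ⟨z, h', hm⟩)
  | mul x y ihx ihy =>
    intro α β p l
    constructor
    · intro h
      have h' : ((α,(p,β)::l) : GS T A) ∈ gsCat (gsLang x) (gsLang y) := h
      rcases mem_gsCat_cons.mp h' with ⟨h1, h2⟩ | ⟨l1, l2, rfl, h1, h2⟩
      · have hx : eps α x = true := (mem_gsLang_nil x α).mp h1
        obtain ⟨z, hz, hm⟩ := (ihy α β p l).mp h2
        refine ⟨z, ?_, hm⟩
        show z ∈ katPDeriv α p (x.mul y)
        simp only [katPDeriv, hx, if_true]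
        exact List.mem_append.mpr (Or.inr hz)
      · obtain ⟨z, hz, hm⟩ := (ihx α β p l1).mp h1
        refine ⟨z.mul y, ?_, ?_⟩
        · show z.mul y ∈ katPDeriv α p (x.mul y)
          by_cases hx' : eps α x
          · simp only [katPDeriv, hx', if_true]
            exact List.mem_append.mpr (Or.inl (List.mem_map.mpr ⟨z, hz, rfl⟩))
          · simp only [katPDeriv, hx', if_false]
            exact List.mem_map.mpr ⟨z, hz, rfl⟩
        · show ((β, l1 ++ l2) : GS T A) ∈ gsCat (gsLang z) (gsLang y)
          exact mem_gsCat.mpr ⟨l1, l2, rfl, hm, h2⟩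
    · rintro ⟨z', hz', hm⟩
      have hz'' : z' ∈ (if eps α x then
          (katPDeriv α p x).map (KATExp.mul · y) ++ katPDeriv α p y
          else (katPDeriv α p x).map (KATExp.mul · y)) := hz'
      show ((α,(p,β)::l) : GS T A) ∈ gsCat (gsLang x) (gsLang y)
      by_cases hx : eps α x
      · rw [if_pos hx] at hz''
        rcases List.mem_append.mp hz'' with h' | h'
        · obtain ⟨z, hz, rfl⟩ := List.mem_map.mp h'
          have hm' : ((β,l) : GS T A) ∈ gsCat (gsLang z) (gsLang y) := hm
          obtain ⟨l1, l2, rfl, h1, h2⟩ := mem_gsCat.mp hm'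
          exact mem_gsCat_cons.mpr
            (Or.inr ⟨l1, l2, rfl, (ihx α β p l1).mpr ⟨z, hz, h1⟩, h2⟩)
        · exact mem_gsCat_cons.mpr
            (Or.inl ⟨(mem_gsLang_nil x α).mpr hx, (ihy α β p l).mpr ⟨z', h', hm⟩⟩)
      · rw [if_neg hx] at hz''
        obtain ⟨z, hz, rfl⟩ := List.mem_map.mp hz''
        have hm' : ((β,l) : GS T A) ∈ gsCat (gsLang z) (gsLang y) := hm
        obtain ⟨l1, l2, rfl, h1, h2⟩ := mem_gsCat.mp hm'
        exact mem_gsCat_cons.mpr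
          (Or.inr ⟨l1, l2, rfl, (ihx α β p l1).mpr ⟨z, hz, h1⟩, h2⟩)
  | star x ih =>
    intro α β p l
    constructor
    · intro h
      have h' : ((α,(p,β)::l) : GS T A) ∈ ⋃ n : ℕ, gsPow (gsLang x) n := h
      obtain ⟨l1, l2, rfl, h1, h2⟩ := mem_star_cons.mp h'
      obtain ⟨z, hz, hm⟩ := (ih α β p l1).mp h1
      refine ⟨z.mul (.star x), ?_, ?_⟩
      · show z.mul (.star x) ∈ (katPDeriv α p x).map (KATExp.mul · (.star x))
        exact List.mem_map.mpr ⟨z, hz, rfl⟩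
      · show ((β, l1 ++ l2) : GS T A) ∈ gsCat (gsLang z) (gsLang (KATExp.star x))
        exact mem_gsCat.mpr ⟨l1, l2, rfl, hm, h2⟩
    · rintro ⟨z', hz', hm⟩
      have hz'' : z' ∈ (katPDeriv α p x).map (KATExp.mul · (.star x)) := hz'
      obtain ⟨z, hz, rfl⟩ := List.mem_map.mp hz''
      have hm' : ((β,l) : GS T A) ∈ gsCat (gsLang z) (gsLang (KATExp.star x)) := hm
      obtain ⟨l1, l2, rfl, h1, h2⟩ := mem_gsCat.mp hm'
      show ((α,(p,β)::(l1++l2)) : GS T A) ∈ ⋃ n : ℕ, gsPow (gsLang x) n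
      exact mem_star_cons.mpr ⟨l1, l2, rfl, (ih α β p l1).mpr ⟨z, hz, h1⟩, h2⟩

lemma mem_gsLangL_nil (X : List (KATExp T A)) (α : Atom T) :
    ((α, ([] : List (A × Atom T))) : GS T A) ∈ gsLangL X ↔ epsL α X = true := by
  constructor
  · intro h
    have h' : ∃ x ∈ X, ((α, ([] : List (A × Atom T))) : GS T A) ∈ gsLang x := h
    obtain ⟨x, hx, hm⟩ := h'
    exact List.any_eq_true.mpr ⟨x, hx, (mem_gsLang_nil x α).mp hm⟩
  · intro h
    obtain ⟨x, hx, he⟩ := List.any_eq_true.mp h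
    show ∃ x ∈ X, ((α, ([] : List (A × Atom T))) : GS T A) ∈ gsLang x
    exact ⟨x, hx, (mem_gsLang_nil x α).mpr he⟩

lemma mem_gsLangL_cons (X : List (KATExp T A)) (α β : Atom T) (p : A)
    (l : List (A × Atom T)) :
    ((α,(p,β)::l) : GS T A) ∈ gsLangL X ↔
      ((β,l) : GS T A) ∈ gsLangL (katPDerivL α p X) := by
  constructor
  · intro h
    have h' : ∃ x ∈ X, ((α,(p,β)::l) : GS T A) ∈ gsLang x := h
    obtain ⟨x, hx, hm⟩ := h'
    obtain ⟨y, hy, hm'⟩ := (mem_gsLang_cons x α β p l).mp hm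
    show ∃ y ∈ katPDerivL α p X, ((β,l) : GS T A) ∈ gsLang y
    refine ⟨y, ?_, hm'⟩
    exact List.mem_flatten.mpr ⟨katPDeriv α p x, List.mem_map.mpr ⟨x, hx, rfl⟩, hy⟩
  · intro h
    have h' : ∃ y ∈ katPDerivL α p X, ((β,l) : GS T A) ∈ gsLang y := h
    obtain ⟨y, hy, hm⟩ := h'
    obtain ⟨L, hL, hy'⟩ := List.mem_flatten.mp hy
    obtain ⟨x, hx, rfl⟩ := List.mem_map.mp hL
    show ∃ x ∈ X, ((α,(p,β)::l) : GS T A) ∈ gsLang x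
    exact ⟨x, hx, (mem_gsLang_cons x α β p l).mpr ⟨y, hy', hm⟩⟩

end Aux

/-- If `R` is a bisimulation between finite sets of KAT expressions and
`X R Y`, then the guarded-string languages of `X` and `Y` coincide. -/
theorem bisim_gsLang {T A : Type} [DecidableEq (Atom T)] [DecidableEq A]
    (R : List (KATExp T A) → List (KATExp T A) → Prop)
    (hbisim : ∀ X Y, R X Y →
      (∀ α : Atom T, epsL α X = epsL α Y)
      ∧ (∀ (α : Atom T) (p : A), R (katPDerivL α p X) (katPDerivL α p Y)))
    (X Y : List (KATExp T A)) (hXY : R X Y) :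
    gsLangL X = gsLangL Y := by
  have key : ∀ (l : List (A × Atom T)) (α : Atom T) (X Y : List (KATExp T A)),
      R X Y → (((α, l) : GS T A) ∈ gsLangL X ↔ ((α, l) : GS T A) ∈ gsLangL Y) := by
    intro l
    induction l with
    | nil =>
      intro α X Y h
      refine (mem_gsLangL_nil X α).trans ?_
      rw [(hbisim X Y h).1 α]
      exact (mem_gsLangL_nil Y α).symm
    | cons hd tl ih =>
      intro α X Y h
      obtain ⟨p, β⟩ := hd
      exact (mem_gsLangL_cons X α β p tl).trans
        ((ih β _ _ ((hbisim X Y h).2 α p)).trans (mem_gsLangL_cons Y α β p tl).symm)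
  ext u
  exact key u.2 u.1 X Y hXY
end
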